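/- Let B and C be complex Hermitian n×n matrices and suppose the univariate polynomial q(s) = det(C − sB) has n distinct real zeroes s_1, …, s_n. Then B is positive definite if and only if for each i = 1, …, n the compression of B to ker(C − s_i B) is positive definite, i.e., v* B v > 0 for every nonzero v ∈ ker(C − s_i B). -/

import Mathlib

open scoped ComplexOrder
open Matrix Polynomial

private lemma herm_swap {n : ℕ} {M : Matrix (Fin n) (Fin n) ℂ} (hM : M.IsHermitian)
    (x y : Fin n → ℂ) : star (M *ᵥ x) ⬝ᵥ y = star x ⬝ᵥ M *ᵥ y := by
  rw [star_mulVec, ← Matrix.dotProduct_mulVec, hM.eq]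

private lemma dp_sum {n m : Type*} [Fintype n] [Fintype m] (u : n → ℂ) (f : m → n → ℂ) :
    u ⬝ᵥ (∑ j, f j) = ∑ j, u ⬝ᵥ f j := by
  simp only [dotProduct, Finset.sum_apply, Finset.mul_sum]
  rw [Finset.sum_comm]

private lemma sum_dp {n m : Type*} [Fintype n] [Fintype m] (f : m → n → ℂ) (u : n → ℂ) :
    (∑ j, f j) ⬝ᵥ u = ∑ j, f j ⬝ᵥ u := by
  simp only [dotProduct, Finset.sum_apply, Finset.sum_mul]
  rw [Finset.sum_comm]

/-- If `B, C` are Hermitian and `q(s) = det(C − sB)` has `n` distinct real zeroes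
`s_1, …, s_n`, then `B` is positive definite iff the compression of `B` to each
kernel `ker(C − s_i B)` is positive definite. -/
theorem stmt18 {n : ℕ} (B C : Matrix (Fin n) (Fin n) ℂ)
    (hB : B.IsHermitian) (hC : C.IsHermitian) (s : Fin n → ℝ)
    (hs : Function.Injective s)
    (hroots : (Matrix.det (C.map Polynomial.C -
        (Polynomial.X : Polynomial ℂ) • B.map Polynomial.C)).roots =
      Multiset.map (fun i => ((s i : ℝ) : ℂ)) Finset.univ.val) :
    B.PosDef ↔
      ∀ i : Fin n, ∀ v : Fin n → ℂ, (C - (s i : ℂ) • B) *ᵥ v = 0 → v ≠ 0 →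
        0 < (star v ⬝ᵥ B *ᵥ v).re := by
  constructor
  · intro hpd i v hv hvne
    have := hpd.dotProduct_mulVec_pos hvne
    rw [Complex.lt_def] at this
    simpa using this.1
  intro h
  refine Matrix.PosDef.of_dotProduct_mulVec_pos hB ?_
  rcases Nat.eq_zero_or_pos n with rfl | hn
  · intro x hx; exact absurd (Subsingleton.elim x 0) hx
  set p : ℂ[X] := Matrix.det (C.map Polynomial.C - (X : ℂ[X]) • B.map Polynomial.C) with hp
  have hform : C.map Polynomial.C - (X : ℂ[X]) • B.map Polynomial.C
      = (X : ℂ[X]) • ((-B).map Polynomial.C) + C.map Polynomial.C := by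
    ext i j
    simp only [Matrix.sub_apply, Matrix.add_apply, Matrix.smul_apply, Matrix.map_apply,
      Matrix.neg_apply, map_neg, smul_eq_mul]
    ring
  have hle : p.natDegree ≤ n := by
    rw [hp, hform]
    simpa using Polynomial.natDegree_det_X_add_C_le (-B) C
  have hcoeff : p.coeff n = (-1 : ℂ) ^ n * B.det := by
    rw [hp, hform]
    have := Polynomial.coeff_det_X_add_C_card (-B) C
    simpa [Matrix.det_neg] using this
  have hcard : p.roots.card = n := by rw [hroots]; simp
  have hp0 : p ≠ 0 := by
    intro h0
    rw [h0, Polynomial.roots_zero] at hcard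
    simp at hcard; omega
  have hdeg : p.natDegree = n :=
    le_antisymm hle (hcard ▸ p.card_roots')
  have hdetB : B.det ≠ 0 := by
    intro h0
    have h1 : p.leadingCoeff = 0 := by
      rw [Polynomial.leadingCoeff, hdeg, hcoeff, h0, mul_zero]
    exact hp0 (Polynomial.leadingCoeff_eq_zero.mp h1)
  have hBu : IsUnit B.det := isUnit_iff_ne_zero.mpr hdetB
  -- each s i gives a kernel vector
  have hdet_i : ∀ i, (C - (s i : ℂ) • B).det = 0 := by
    intro i
    have hmem : ((s i : ℝ) : ℂ) ∈ p.roots := by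
      rw [hroots]; exact Multiset.mem_map.2 ⟨i, Finset.mem_univ_val i, rfl⟩
    have hroot : p.IsRoot ((s i : ℝ) : ℂ) := (Polynomial.mem_roots'.1 hmem).2
    have hmap : (C.map Polynomial.C - (X : ℂ[X]) • B.map Polynomial.C).map
        (evalRingHom ((s i : ℝ) : ℂ)) = C - (s i : ℂ) • B := by
      ext a b
      simp only [Matrix.map_apply, Matrix.sub_apply, Matrix.smul_apply, smul_eq_mul,
        coe_evalRingHom, eval_sub, eval_mul, eval_X, eval_C, Pi.smul_apply]
    have hdet := (evalRingHom ((s i : ℝ) : ℂ)).map_det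
      (C.map Polynomial.C - (X : ℂ[X]) • B.map Polynomial.C)
    rw [RingHom.mapMatrix_apply] at hdet
    rw [← hmap, ← hdet]
    exact hroot
  have hex : ∀ i, ∃ v, v ≠ 0 ∧ (C - (s i : ℂ) • B) *ᵥ v = 0 := by
    intro i
    obtain ⟨v, hv1, hv2⟩ := Matrix.exists_mulVec_eq_zero_iff.2 (hdet_i i)
    exact ⟨v, hv1, hv2⟩
  choose v hvne hveq using hex
  have hCv : ∀ i, C *ᵥ v i = (s i : ℂ) • (B *ᵥ v i) := by
    intro i
    have := hveq i
    rw [Matrix.sub_mulVec, Matrix.smul_mulVec, sub_eq_zero] at this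
    exact this
  set d : Fin n → Fin n → ℂ := fun i j => star (v i) ⬝ᵥ B *ᵥ v j with hd
  have horth : ∀ i j, i ≠ j → d i j = 0 := by
    intro i j hij
    have h1 : star (v i) ⬝ᵥ C *ᵥ v j = (s j : ℂ) * d i j := by
      rw [hCv j, dotProduct_smul]; rfl
    have h2 : star (v i) ⬝ᵥ C *ᵥ v j = (s i : ℂ) * d i j := by
      rw [← herm_swap hC, hCv i, star_smul, smul_dotProduct, herm_swap hB]
      simp [Complex.star_def, Complex.conj_ofReal, hd]
    have h3 : ((s j : ℂ) - (s i : ℂ)) * d i j = 0 := by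
      rw [sub_mul, ← h1, ← h2, sub_self]
    rcases mul_eq_zero.1 h3 with h4 | h4
    · exfalso
      apply hij
      apply hs
      have : (s j : ℂ) = (s i : ℂ) := by linear_combination h4
      exact_mod_cast this.symm
    · exact h4
  have hdre : ∀ i, 0 < (d i i).re := fun i => h i (v i) (hveq i) (hvne i)
  have hdim : ∀ i, (d i i).im = 0 := by
    intro i
    have : (starRingEnd ℂ) (d i i) = d i i := by
      have h1 : star (d i i) = star (B *ᵥ v i) ⬝ᵥ v i := by
        rw [hd]
        dsimp only
        rw [Matrix.star_dotProduct, star_star]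
      rw [Complex.star_def] at h1
      rw [h1, herm_swap hB]
    exact Complex.conj_eq_iff_im.1 this
  -- eigenvector basis
  set f : Module.End ℂ (Fin n → ℂ) := Matrix.mulVecLin (B⁻¹ * C) with hf
  have hfv : ∀ i, f (v i) = ((s i : ℂ)) • v i := by
    intro i
    rw [hf]
    show (B⁻¹ * C) *ᵥ v i = _
    rw [← Matrix.mulVec_mulVec, hCv i, Matrix.mulVec_smul, Matrix.mulVec_mulVec,
      Matrix.nonsing_inv_mul B hBu, Matrix.one_mulVec]
  have hinj : Function.Injective (fun i => ((s i : ℝ) : ℂ)) :=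
    fun a b hab => hs (Complex.ofReal_injective hab)
  have li : LinearIndependent ℂ v :=
    f.eigenvectors_linearIndependent' (fun i => ((s i : ℝ) : ℂ)) hinj v
      (fun i => ⟨Module.End.mem_eigenspace_iff.2 (hfv i), hvne i⟩)
  haveI : Nonempty (Fin n) := Fin.pos_iff_nonempty.1 hn
  have hcardeq : Fintype.card (Fin n) = Module.finrank ℂ (Fin n → ℂ) := by simp
  set b : Module.Basis (Fin n) ℂ (Fin n → ℂ) := basisOfLinearIndependentOfCardEqFinrank li hcardeq with hb
  have hbv : ∀ i, b i = v i := fun i =>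
    congrFun (coe_basisOfLinearIndependentOfCardEqFinrank li hcardeq) i
  intro x hx
  set c : Fin n → ℂ := fun i => b.repr x i with hc
  have hxsum : x = ∑ i, c i • v i := by
    conv_lhs => rw [← b.sum_repr x]
    exact Finset.sum_congr rfl fun i _ => by rw [hbv i]
  have hz : star x ⬝ᵥ B *ᵥ x = ∑ i, (starRingEnd ℂ) (c i) * c i * d i i := by
    have hBx : B *ᵥ x = ∑ j, c j • (B *ᵥ v j) := by
      rw [hxsum, ← Matrix.mulVecLin_apply, _root_.map_sum]
      exact Finset.sum_congr rfl fun j _ => by rw [LinearMap.map_smul, Matrix.mulVecLin_apply]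
    calc star x ⬝ᵥ B *ᵥ x
        = ∑ j, ∑ i, (starRingEnd ℂ) (c i) * c j * d i j := by
          rw [hBx, dp_sum]
          refine Finset.sum_congr rfl fun j _ => ?_
          rw [dotProduct_smul, hxsum, star_sum, sum_dp, Finset.smul_sum]
          refine Finset.sum_congr rfl fun i _ => ?_
          rw [star_smul, smul_dotProduct]
          simp only [smul_eq_mul, hd, Complex.star_def]
          ring
      _ = ∑ j, (starRingEnd ℂ) (c j) * c j * d j j := by
          refine Finset.sum_congr rfl fun j _ => ?_
          refine Finset.sum_eq_single j (fun i _ hij => by rw [horth i j hij, mul_zero])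
            (fun hj => absurd (Finset.mem_univ j) hj)
  have hcne : ∃ i, c i ≠ 0 := by
    by_contra hcon
    push_neg at hcon
    apply hx
    rw [hxsum]
    simp [hcon]
  obtain ⟨i0, hi0⟩ := hcne
  rw [Complex.lt_def, hz]
  constructor
  · rw [Complex.re_sum]
    simp only [Complex.zero_re]
    have hterm : ∀ j, ((starRingEnd ℂ) (c j) * c j * d j j).re
        = Complex.normSq (c j) * (d j j).re := by
      intro j
      rw [Complex.mul_re]
      have h1 : ((starRingEnd ℂ) (c j) * c j) = (Complex.normSq (c j) : ℂ) := by
        rw [mul_comm, Complex.mul_conj]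
      rw [h1]
      simp
    refine Finset.sum_pos' (fun j _ => ?_) ⟨i0, Finset.mem_univ i0, ?_⟩
    · rw [hterm j]
      exact mul_nonneg (Complex.normSq_nonneg _) (le_of_lt (hdre j))
    · rw [hterm i0]
      exact mul_pos (Complex.normSq_pos.2 hi0) (hdre i0)
  · rw [Complex.im_sum]
    simp only [Complex.zero_im]
    symm
    refine Finset.sum_eq_zero fun j _ => ?_
    rw [Complex.mul_im]
    have h1 : ((starRingEnd ℂ) (c j) * c j) = (Complex.normSq (c j) : ℂ) := by
      rw [mul_comm, Complex.mul_conj]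
    rw [h1]
    simp [hdim j]
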